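/- Let s ≥ 2 be an integer and p ≥ 2 an integer with gcd(p,s) = 1, and set ρ = 1/p. Let ν be the self-similar measure with equal weights for the IFS {τ_d(x) = (-1)^d ρ(x+d)}_{d=0}^{s-1}. Then any set Λ ⊂ ℝ such that {e^{2πiλx}}_{λ∈Λ} is orthogonal in L²(ν) has cardinality at most s; in particular ν is not a spectral measure. -/

import Mathlib

open MeasureTheory
open scoped ENNReal
open MeasureTheory Finset Complex Filter
open scoped ENNReal Real Topology
set_option linter.unusedSectionVars false
set_option maxHeartbeats 1000000

/-- The Fourier transform of a measure on `ℝ`. -/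
noncomputable def measureFT (μ : Measure ℝ) (t : ℝ) : ℂ :=
  ∫ x, Complex.exp (2 * (Real.pi : ℂ) * Complex.I * (t : ℂ) * (x : ℂ)) ∂μ

/-- `Λ` is a spectrum of `μ`: the exponentials `{e^{2πiλx}}_{λ∈Λ}` are mutually orthogonal
in `L²(μ)` (each of norm one since `μ` is a probability measure) and total: any `f ∈ L²(μ)`
orthogonal to all of them vanishes `μ`-a.e.; i.e. they form an orthonormal basis of `L²(μ)`. -/
def IsSpectrum (μ : Measure ℝ) (Λ : Set ℝ) : Prop :=
  (∀ l1 ∈ Λ, ∀ l2 ∈ Λ, l1 ≠ l2 → measureFT μ (l1 - l2) = 0) ∧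
    ∀ f : ℝ → ℂ, MemLp f 2 μ →
      (∀ l ∈ Λ, (∫ x, f x * (starRingEnd ℂ)
          (Complex.exp (2 * (Real.pi : ℂ) * Complex.I * (l : ℂ) * (x : ℂ))) ∂μ) = 0) →
      f =ᵐ[μ] 0

/-- `μ` is a spectral measure. -/
def IsSpectral (μ : Measure ℝ) : Prop := ∃ Λ : Set ℝ, IsSpectrum μ Λ

namespace NSC


noncomputable def eI (θ : ℝ) : ℂ := Complex.exp (θ * Complex.I)

lemma eI_add (a b : ℝ) : eI (a + b) = eI a * eI b := by
  simp [eI, ← Complex.exp_add]; ring_nf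

lemma eI_zero : eI 0 = 1 := by simp [eI]

lemma eI_ne_zero (a : ℝ) : eI a ≠ 0 := Complex.exp_ne_zero _

lemma abs_eI (a : ℝ) : ‖eI a‖ = 1 := Complex.norm_exp_ofReal_mul_I a

lemma conj_eI (a : ℝ) : (starRingEnd ℂ) (eI a) = eI (-a) := by
  rw [eI, ← Complex.exp_conj]
  simp [eI]

lemma eI_re (a : ℝ) : (eI a).re = Real.cos a := Complex.exp_ofReal_mul_I_re a

lemma eI_im (a : ℝ) : (eI a).im = Real.sin a := Complex.exp_ofReal_mul_I_im a

lemma eI_pow (a : ℝ) (n : ℕ) : eI a ^ n = eI (n * a) := by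
  rw [eI, eI, ← Complex.exp_nat_mul]; push_cast; ring_nf

lemma eI_eq_one_iff {a : ℝ} : eI a = 1 ↔ ∃ n : ℤ, a = n * (2 * π) := by
  rw [eI, Complex.exp_eq_one_iff]
  constructor
  · rintro ⟨n, hn⟩
    refine ⟨n, ?_⟩
    have : (a : ℂ) = (n : ℂ) * (2 * (π:ℂ)) := by
      have hI : (Complex.I : ℂ) ≠ 0 := Complex.I_ne_zero
      apply mul_right_cancel₀ hI
      rw [hn]; ring
    exact_mod_cast this
  · rintro ⟨n, hn⟩
    exact ⟨n, by rw [hn]; push_cast; ring⟩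

lemma abs_eI_sub_one (θ : ℝ) : ‖eI θ - 1‖ ^ 2 = 2 - 2 * Real.cos θ := by
  rw [Complex.sq_norm, Complex.normSq_apply]
  simp only [Complex.sub_re, Complex.sub_im, eI_re, eI_im, Complex.one_re, Complex.one_im]
  have := Real.sin_sq_add_cos_sq θ
  nlinarith [this]

/-- parity split of a sum over `range n`. -/
lemma sum_range_parity {M : Type*} [AddCommMonoid M] (f : ℕ → M) (n : ℕ) :
    ∑ d ∈ range n, f d = ∑ j ∈ range ((n+1)/2), f (2*j) + ∑ j ∈ range (n/2), f (2*j+1) := by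
  induction n with
  | zero => simp
  | succ n ih =>
    rw [Finset.sum_range_succ, ih]
    rcases Nat.even_or_odd n with ⟨m, hm⟩ | ⟨m, hm⟩
    · have h1 : (n+1+1)/2 = m+1 := by omega
      have h2 : (n+1)/2 = m := by omega
      have h3 : n/2 = m := by omega
      have hm2 : n = 2*m := by omega
      rw [h1, h2, h3, Finset.sum_range_succ (fun j => f (2*j)) m, hm2]
      abel
    · have h1 : (n+1+1)/2 = m+1 := by omega
      have h2 : (n+1)/2 = m+1 := by omega
      have h3 : n/2 = m := by omega
      have hm2 : n = 2*m+1 := by omega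
      rw [h1, h2, h3, Finset.sum_range_succ (fun j => f (2*j+1)) m, hm2]
      abel


/-! ### even case combinatorial kernel -/

noncomputable def Wc (k : ℕ) (u : ℝ) : ℂ := ∑ j ∈ range k, eI (2*π*((2*(j:ℝ)-(k:ℝ)+1)*u))

lemma Wc_conj (k : ℕ) (u : ℝ) : (starRingEnd ℂ) (Wc k u) = Wc k u := by
  unfold Wc
  rw [map_sum]
  rw [← sum_range_reflect (fun j => (starRingEnd ℂ) (eI (2*π*((2*(j:ℝ)-(k:ℝ)+1)*u)))) k]
  apply Finset.sum_congr rfl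
  intro j hj
  have hjk := mem_range.mp hj
  have hc : ((k - 1 - j : ℕ) : ℝ) = (k:ℝ) - 1 - (j:ℝ) := by
    have : (k - 1 - j : ℕ) = k - (1 + j) := by omega
    rw [this, Nat.cast_sub (by omega)]
    push_cast; ring
  rw [conj_eI, hc]
  congr 1; ring

lemma Wc_im (k : ℕ) (u : ℝ) : (Wc k u).im = 0 := by
  have := Wc_conj k u
  have h2 := Complex.conj_eq_iff_im.mp this
  exact h2

lemma Wc_eq_re (k : ℕ) (u : ℝ) : Wc k u = ((Wc k u).re : ℂ) := by
  have := Wc_im k u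
  exact Complex.ext (by simp) (by simp [this])

lemma sum_even_eq (k : ℕ) (u : ℝ) :
    ∑ j ∈ range k, eI (2*π*(2*(j:ℝ)*u)) = eI (2*π*(((k:ℝ)-1)*u)) * Wc k u := by
  unfold Wc
  rw [Finset.mul_sum]
  apply Finset.sum_congr rfl
  intro j _
  rw [← eI_add]
  congr 1; ring

lemma sum_odd_eq (k : ℕ) (u : ℝ) :
    ∑ j ∈ range k, eI (-(2*π*((2*(j:ℝ)+1)*u))) = eI (-(2*π*((k:ℝ)*u))) * Wc k u := by
  unfold Wc
  rw [Finset.mul_sum]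
  rw [← sum_range_reflect (fun j => eI (-(2*π*((2*(j:ℝ)+1)*u)))) k]
  apply Finset.sum_congr rfl
  intro j hj
  have hjk := mem_range.mp hj
  have hc : ((k - 1 - j : ℕ) : ℝ) = (k:ℝ) - 1 - (j:ℝ) := by
    have : (k - 1 - j : ℕ) = k - (1 + j) := by omega
    rw [this, Nat.cast_sub (by omega)]
    push_cast; ring
  rw [hc, ← eI_add]
  congr 1; ring

lemma Wc_zero_arith {k : ℕ} (hk : 1 ≤ k) {u : ℝ} (hW : Wc k u = 0) :
    ∃ c : ℤ, 2*(k:ℝ)*u = (c:ℝ) ∧ ¬ (k:ℤ) ∣ c := by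
  set z : ℂ := eI (2*π*(2*u)) with hz
  have hzpow : ∀ j : ℕ, z ^ j = eI (2*π*(2*(j:ℝ)*u)) := by
    intro j
    rw [hz, eI_pow]
    congr 1; ring
  have hsum : ∑ j ∈ range k, z ^ j = 0 := by
    have h1 := sum_even_eq k u
    have h2 : ∑ j ∈ range k, eI (2*π*(2*(j:ℝ)*u)) = 0 := by
      rw [h1, hW, mul_zero]
    rw [← h2]
    exact Finset.sum_congr rfl (fun j _ => hzpow j)
  have hz1 : z ≠ 1 := by
    intro h1
    rw [h1] at hsum
    simp at hsum
    omega
  have hzk : z ^ k = 1 := by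
    rw [geom_sum_eq hz1] at hsum
    have := div_eq_zero_iff.mp hsum
    rcases this with h | h
    · have : z ^ k = 1 := by linear_combination h
      exact this
    · exact absurd (by linear_combination h) hz1
  rw [hzpow k] at hzk
  rw [eI_eq_one_iff] at hzk
  obtain ⟨n, hn⟩ := hzk
  have hπ : (0:ℝ) < π := Real.pi_pos
  have h2π : (2*π : ℝ) ≠ 0 := by positivity
  have hn' : 2*(k:ℝ)*u = (n:ℝ) := by
    apply mul_left_cancel₀ h2π
    linear_combination hn
  refine ⟨n, hn', ?_⟩
  rintro ⟨m, rfl⟩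
  have hkR : ((k:ℝ)) ≠ 0 := by positivity
  have h2u : 2*u = (m:ℝ) := by
    apply mul_left_cancel₀ hkR
    push_cast at hn' ⊢
    linarith [hn']
  apply hz1
  rw [hz]
  apply eI_eq_one_iff.mpr
  exact ⟨m, by linear_combination 2*π*h2u⟩

/-! ### combinatorics -/

lemma int_coprime_sp {s p : ℕ} (hgcd : Nat.gcd p s = 1) : IsCoprime (s:ℤ) (p:ℤ) := by
  rw [Int.isCoprime_iff_gcd_eq_one, Int.gcd_natCast_natCast, Nat.gcd_comm]
  exact hgcd

lemma comb_odd (s p : ℕ) (hs : 2 ≤ s) (hp : 2 ≤ p) (hgcd : Nat.gcd p s = 1)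
    (Λ : Set ℝ)
    (H : ∀ x ∈ Λ, ∀ y ∈ Λ, x ≠ y → ∃ m : ℕ, ∃ c : ℤ,
      2*(s:ℝ)*(x-y) = (p:ℝ)^m * c ∧ ¬((s:ℤ) ∣ c)) :
    Λ.Finite ∧ Λ.ncard ≤ s := by
  rcases Set.eq_empty_or_nonempty Λ with rfl | ⟨l0, hl0⟩
  · exact ⟨Set.finite_empty, by simp⟩
  haveI : NeZero s := ⟨by omega⟩
  have hz : ∀ x : Λ, ∃ z : ℤ, (z:ℝ) = 2*(s:ℝ)*((x:ℝ) - l0) := by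
    rintro ⟨x, hx⟩
    by_cases hxe : x = l0
    · exact ⟨0, by simp [hxe]⟩
    · obtain ⟨m, c, hmc, -⟩ := H x hx l0 hl0 hxe
      exact ⟨(p:ℤ)^m * c, by push_cast; rw [← hmc]⟩
  choose g hg using hz
  have hinj : Function.Injective (fun x : Λ => ((g x : ZMod s))) := by
    intro x y hxy
    by_contra hne
    have hxyv : (x:ℝ) ≠ (y:ℝ) := fun h => hne (Subtype.ext h)
    obtain ⟨m, c, hmc, hnd⟩ := H x x.2 y y.2 hxyv
    have hzz : ((g x - g y : ℤ):ℝ) = (p:ℝ)^m * c := by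
      push_cast
      rw [hg x, hg y] at *
      linarith [hmc]
    have hZint : (g x - g y : ℤ) = (p:ℤ)^m * c := by exact_mod_cast hzz
    have hdvd : (s:ℤ) ∣ (g x - g y) := by
      have h0 : ((g x - g y : ℤ) : ZMod s) = 0 := by
        push_cast
        simp only [hxy]
        ring
      exact (ZMod.intCast_zmod_eq_zero_iff_dvd _ _).mp h0
    rw [hZint] at hdvd
    exact hnd (((int_coprime_sp hgcd).pow_right (n := m)).dvd_of_dvd_mul_left hdvd)
  haveI : Finite Λ := Finite.of_injective _ hinj
  refine ⟨Set.toFinite Λ, ?_⟩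
  calc Λ.ncard = Nat.card Λ := (Nat.card_coe_set_eq Λ).symm
  _ ≤ Nat.card (ZMod s) := Nat.card_le_card_of_injective _ hinj
  _ = s := Nat.card_zmod s

lemma class_bound (s p k : ℕ) (hk : s = 2*k) (hs : 2 ≤ s) (hp : 2 ≤ p)
    (hgcd : Nat.gcd p s = 1) (hpodd : Odd (p:ℤ))
    (Λ : Set ℝ)
    (H : ∀ x ∈ Λ, ∀ y ∈ Λ, x ≠ y →
      (∃ m : ℕ, ∃ c : ℤ, (s:ℝ)*(x-y) = (p:ℝ)^m * c ∧ ¬((k:ℤ) ∣ c)) ∨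
      (∃ m : ℕ, ∃ b : ℤ, 2*((s:ℝ)-1)*(p:ℝ)*(x-y) - 2*(x-y) = (p:ℝ)^m * (2*b+1)))
    (x1 : ℝ) :
    {x | x ∈ Λ ∧ ∃ z : ℤ, (z:ℝ) = (s:ℝ)*(x - x1)}.Finite ∧
    {x | x ∈ Λ ∧ ∃ z : ℤ, (z:ℝ) = (s:ℝ)*(x - x1)}.ncard ≤ k := by
  haveI : NeZero k := ⟨by omega⟩
  set C := {x | x ∈ Λ ∧ ∃ z : ℤ, (z:ℝ) = (s:ℝ)*(x - x1)} with hC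
  have hz : ∀ x : C, ∃ z : ℤ, (z:ℝ) = (s:ℝ)*((x:ℝ) - x1) := fun x => x.2.2
  choose g hg using hz
  have hinj : Function.Injective (fun x : C => ((g x : ZMod k))) := by
    intro x y hxy
    by_contra hne
    have hxyv : (x:ℝ) ≠ (y:ℝ) := fun h => hne (Subtype.ext h)
    have hzz : ((g x - g y : ℤ):ℝ) = (s:ℝ)*((x:ℝ)-(y:ℝ)) := by
      push_cast
      rw [hg x, hg y] at *
      ring
    have hdvd : (k:ℤ) ∣ (g x - g y) := by
      have h0 : ((g x - g y : ℤ) : ZMod k) = 0 := by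
        push_cast
        simp only [hxy]
        ring
      exact (ZMod.intCast_zmod_eq_zero_iff_dvd _ _).mp h0
    obtain ⟨w, hw⟩ := hdvd
    rcases H x x.2.1 y y.2.1 hxyv with ⟨m, c, hmc, hnd⟩ | ⟨m, b, hmb⟩
    · apply hnd
      have hZint : (g x - g y : ℤ) = (p:ℤ)^m * c := by
        have h1 : ((g x - g y : ℤ) : ℝ) = (p:ℝ)^m * c := hzz.trans hmc
        exact_mod_cast h1
      have hkd : (k:ℤ) ∣ (p:ℤ)^m * c := hZint ▸ ⟨w, hw⟩
      have hco : IsCoprime ((k:ℤ)) ((p:ℤ)) := by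
        have h1 : Nat.gcd p k = 1 := Nat.Coprime.coprime_dvd_right ⟨2, by omega⟩ hgcd
        rw [Int.isCoprime_iff_gcd_eq_one, Int.gcd_natCast_natCast, Nat.gcd_comm]
        exact h1
      exact (hco.pow_right (n := m)).dvd_of_dvd_mul_left hkd
    · -- type 2 within a class: contradiction with parity
      have zr : ((g x : ℝ)) - (g y : ℝ) = (s:ℝ)*((x:ℝ)-(y:ℝ)) := by exact_mod_cast hzz
      have hZ2 : 2*((s:ℤ)-1)*(p:ℤ)*(g x - g y) - 2*(g x - g y)
          = (s:ℤ)*((p:ℤ)^m*(2*b+1)) := by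
        have hr : ((2*((s:ℤ)-1)*(p:ℤ)*(g x - g y) - 2*(g x - g y) : ℤ) : ℝ)
            = (((s:ℤ)*((p:ℤ)^m*(2*b+1)) : ℤ) : ℝ) := by
          push_cast
          linear_combination (2*((s:ℝ)-1)*(p:ℝ))*zr - 2*zr + (s:ℝ)*hmb
        exact_mod_cast hr
      rw [hw] at hZ2
      have hks : (s:ℤ) = 2*(k:ℤ) := by exact_mod_cast hk
      have h2k : (2*(k:ℤ)) ≠ 0 := by
        have : (0:ℤ) < k := by exact_mod_cast Nat.pos_of_ne_zero (NeZero.ne k)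
        omega
      have hfin : ((s:ℤ)-1)*(p:ℤ)*w - w = (p:ℤ)^m*(2*b+1) := by
        apply mul_left_cancel₀ h2k
        rw [hks] at hZ2
        linear_combination hZ2 + 2*(k:ℤ)*(p:ℤ)*w*hks
      have hodd : Odd ((p:ℤ)^m*(2*b+1)) := (hpodd.pow).mul ⟨b, by ring⟩
      have heven : Even (((s:ℤ)-1)*(p:ℤ)*w - w) := by
        have : ((s:ℤ)-1)*(p:ℤ)*w - w = w * (((s:ℤ)-1)*(p:ℤ) - 1) := by ring
        rw [this]
        apply Even.mul_left
        have hodd1 : Odd (((s:ℤ)-1)*(p:ℤ)) := by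
          apply Odd.mul _ hpodd
          rw [hks]
          exact ⟨k-1, by ring⟩
        have : ¬ Even (((s:ℤ)-1)*(p:ℤ)) := Int.not_even_iff_odd.mpr hodd1
        exact Int.even_sub_one.mpr this
      rw [hfin] at heven
      exact (Int.not_odd_iff_even.mpr heven) hodd
  haveI : Finite C := Finite.of_injective _ hinj
  refine ⟨Set.toFinite C, ?_⟩
  calc C.ncard = Nat.card C := (Nat.card_coe_set_eq C).symm
  _ ≤ Nat.card (ZMod k) := Nat.card_le_card_of_injective _ hinj
  _ = k := Nat.card_zmod k

lemma comb_even (s p k : ℕ) (hk : s = 2*k) (hs : 2 ≤ s) (hp : 2 ≤ p)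
    (hgcd : Nat.gcd p s = 1)
    (Λ : Set ℝ)
    (H : ∀ x ∈ Λ, ∀ y ∈ Λ, x ≠ y →
      (∃ m : ℕ, ∃ c : ℤ, (s:ℝ)*(x-y) = (p:ℝ)^m * c ∧ ¬((k:ℤ) ∣ c)) ∨
      (∃ m : ℕ, ∃ b : ℤ, 2*((s:ℝ)-1)*(p:ℝ)*(x-y) - 2*(x-y) = (p:ℝ)^m * (2*b+1))) :
    Λ.Finite ∧ Λ.ncard ≤ s := by
  have hpodd : Odd ((p:ℤ)) := by
    rcases Int.even_or_odd (p:ℤ) with he | ho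
    · exfalso
      have h2p : 2 ∣ p := (by exact_mod_cast he : Even p).two_dvd
      have h2s : 2 ∣ s := ⟨k, hk⟩
      have : 2 ∣ Nat.gcd p s := Nat.dvd_gcd h2p h2s
      omega
    · exact ho
  have hRrefl : ∀ x : ℝ, ∃ z : ℤ, (z:ℝ) = (s:ℝ)*(x - x) := fun x => ⟨0, by simp⟩
  rcases Set.eq_empty_or_nonempty Λ with rfl | ⟨l0, hl0⟩
  · exact ⟨Set.finite_empty, by simp⟩
  by_cases hall : ∀ x ∈ Λ, ∃ z : ℤ, (z:ℝ) = (s:ℝ)*(x - l0)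
  · have hsub : Λ ⊆ {x | x ∈ Λ ∧ ∃ z : ℤ, (z:ℝ) = (s:ℝ)*(x - l0)} :=
      fun x hx => ⟨hx, hall x hx⟩
    obtain ⟨hfin, hcard⟩ := class_bound s p k hk hs hp hgcd hpodd Λ H l0
    refine ⟨hfin.subset hsub, ?_⟩
    calc Λ.ncard ≤ _ := Set.ncard_le_ncard hsub hfin
    _ ≤ k := hcard
    _ ≤ s := by omega
  · push_neg at hall
    obtain ⟨l1, hl1, hnR⟩ := hall
    have hcover : Λ ⊆ {x | x ∈ Λ ∧ ∃ z : ℤ, (z:ℝ) = (s:ℝ)*(x - l0)}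
        ∪ {x | x ∈ Λ ∧ ∃ z : ℤ, (z:ℝ) = (s:ℝ)*(x - l1)} := by
      intro x hx
      by_contra hxn
      simp only [Set.mem_union, Set.mem_setOf_eq, not_or, not_and] at hxn
      obtain ⟨hx0, hx1⟩ := hxn
      have hR0 : ¬ ∃ z : ℤ, (z:ℝ) = (s:ℝ)*(x - l0) := hx0 hx
      have hR1 : ¬ ∃ z : ℤ, (z:ℝ) = (s:ℝ)*(x - l1) := hx1 hx
      -- all three pairs are of the second type
      have hT2 : ∀ a ∈ Λ, ∀ b ∈ Λ, a ≠ b → (¬ ∃ z : ℤ, (z:ℝ) = (s:ℝ)*(a - b)) →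
          ∃ m : ℕ, ∃ c : ℤ, 2*((s:ℝ)-1)*(p:ℝ)*(a-b) - 2*(a-b) = (p:ℝ)^m * (2*c+1) := by
        intro a ha b hb hab hnRab
        rcases H a ha b hb hab with ⟨m, c, hmc, -⟩ | h2
        · exact absurd ⟨(p:ℤ)^m*c, by push_cast; rw [← hmc]⟩ hnRab
        · exact h2
      have hxl0 : x ≠ l0 := fun h => hR0 ⟨0, by rw [h]; simp⟩
      have hxl1 : x ≠ l1 := fun h => hR1 ⟨0, by rw [h]; simp⟩
      have hnR' : ¬ ∃ z : ℤ, (z:ℝ) = (s:ℝ)*(l1 - l0) := not_exists.mpr hnR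
      have hl10 : l1 ≠ l0 := fun h => hnR' ⟨0, by rw [h]; simp⟩
      obtain ⟨m1, b1, h1⟩ := hT2 x hx l1 hl1 hxl1 hR1
      obtain ⟨m2, b2, h2⟩ := hT2 l1 hl1 l0 hl0 hl10 hnR'
      obtain ⟨m3, b3, h3⟩ := hT2 x hx l0 hl0 hxl0 hR0
      have hsum : (p:ℝ)^m3*(2*(b3:ℝ)+1) = (p:ℝ)^m1*(2*(b1:ℝ)+1) + (p:ℝ)^m2*(2*(b2:ℝ)+1) := by
        rw [← h1, ← h2, ← h3]
        ring
      have hZ : (p:ℤ)^m3*(2*b3+1) = (p:ℤ)^m1*(2*b1+1) + (p:ℤ)^m2*(2*b2+1) := by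
        exact_mod_cast hsum
      have hodd3 : Odd ((p:ℤ)^m3*(2*b3+1)) := (hpodd.pow).mul ⟨b3, by ring⟩
      have heven : Even ((p:ℤ)^m1*(2*b1+1) + (p:ℤ)^m2*(2*b2+1)) :=
        Odd.add_odd ((hpodd.pow).mul ⟨b1, by ring⟩) ((hpodd.pow).mul ⟨b2, by ring⟩)
      rw [hZ] at hodd3
      exact (Int.not_odd_iff_even.mpr heven) hodd3
    obtain ⟨hfin0, hcard0⟩ := class_bound s p k hk hs hp hgcd hpodd Λ H l0
    obtain ⟨hfin1, hcard1⟩ := class_bound s p k hk hs hp hgcd hpodd Λ H l1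
    refine ⟨(hfin0.union hfin1).subset hcover, ?_⟩
    calc Λ.ncard ≤ _ := Set.ncard_le_ncard hcover (hfin0.union hfin1)
    _ ≤ _ + _ := Set.ncard_union_le _ _
    _ ≤ k + k := Nat.add_le_add hcard0 hcard1
    _ = s := by omega

section M

variable (ν : Measure ℝ) [IsProbabilityMeasure ν]

lemma measureFT_eq (t : ℝ) : measureFT ν t = ∫ x, eI (2*π*(t*x)) ∂ν := by
  unfold measureFT eI
  congr 1; funext x; congr 1; push_cast; ring

lemma aesm_eI (g : ℝ → ℝ) (hg : Measurable g) (μ : Measure ℝ) :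
    AEStronglyMeasurable (fun x => eI (g x)) μ := by
  have : Measurable fun x => eI (g x) := by
    unfold eI
    exact Complex.measurable_exp.comp ((Complex.measurable_ofReal.comp hg).mul measurable_const)
  exact this.aestronglyMeasurable

lemma integrable_eI (g : ℝ → ℝ) (hg : Measurable g) (μ : Measure ℝ) [IsProbabilityMeasure μ] :
    Integrable (fun x => eI (g x)) μ := by
  refine Integrable.mono' (integrable_const 1) (aesm_eI g hg μ) ?_
  filter_upwards with x
  simp [eI, Complex.norm_exp]

lemma F_zero : measureFT ν 0 = 1 := by
  rw [measureFT_eq]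
  simp [eI_zero]

lemma F_conj (t : ℝ) : (starRingEnd ℂ) (measureFT ν t) = measureFT ν (-t) := by
  rw [measureFT_eq, measureFT_eq, ← integral_conj]
  congr 1; funext x
  rw [conj_eI]; congr 1; ring

lemma F_tendsto (t : ℝ) {p : ℕ} (hp : 2 ≤ p) :
    Tendsto (fun n => measureFT ν (t / p^n)) atTop (𝓝 1) := by
  have h0 : Tendsto (fun n : ℕ => t / (p:ℝ)^n) atTop (𝓝 0) := by
    have h1 : Tendsto (fun n : ℕ => ((p:ℝ)⁻¹)^n) atTop (𝓝 0) := by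
      apply tendsto_pow_atTop_nhds_zero_of_lt_one
      · positivity
      · rw [inv_lt_one_iff₀]; right; exact_mod_cast by omega
    have := h1.const_mul t
    simpa [div_eq_mul_inv, inv_pow, mul_zero] using this
  have key : ∀ x : ℝ, Tendsto (fun n => eI (2*π*((t/p^n)*x))) atTop (𝓝 1) := by
    intro x
    have hc : Continuous fun a : ℝ => eI (2*π*(a*x)) := by
      unfold eI
      exact Complex.continuous_exp.comp
        ((Complex.continuous_ofReal.comp (by continuity)).mul continuous_const)
    have := (hc.tendsto 0).comp h0
    simpa [eI_zero, Function.comp_def] using this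
  have := tendsto_integral_of_dominated_convergence (μ := ν)
      (F := fun n x => eI (2*π*((t/p^n)*x))) (f := fun _ => (1:ℂ)) (fun _ => (1:ℝ))
      (fun n => aesm_eI _ (by fun_prop) ν) (integrable_const 1)
      (fun n => by filter_upwards with x; simp [abs_eI])
      (by filter_upwards with x using key x)
  simp only [integral_const, probReal_univ, one_smul] at this
  have heq : ∀ n : ℕ, measureFT ν (t / p^n) = ∫ x, eI (2*π*((t/p^n)*x)) ∂ν :=
    fun n => measureFT_eq ν _
  simpa [heq] using this


variable {s p : ℕ} {ρ : ℝ}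

lemma feq (hs : 2 ≤ s) (hρ : ρ = 1/p)
    (hself : ν = (s : ℝ≥0∞)⁻¹ • ∑ d ∈ Finset.range s,
      Measure.map (fun x : ℝ => (-1 : ℝ) ^ d * ρ * (x + (d : ℝ))) ν) (t : ℝ) :
    measureFT ν t = (s:ℂ)⁻¹ * ∑ d ∈ range s,
      eI (2*π*((-1)^d*ρ*(d:ℝ)*t)) * measureFT ν ((-1)^d*ρ*t) := by
  have hτ : ∀ d : ℕ, Measurable fun x : ℝ => (-1:ℝ)^d*ρ*(x+(d:ℝ)) := fun d => by fun_prop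
  have hint : ∀ (d : ℕ), Integrable (fun x => eI (2*π*(t*x)))
      (Measure.map (fun x : ℝ => (-1:ℝ)^d*ρ*(x+(d:ℝ))) ν) := by
    intro d
    haveI := Measure.isProbabilityMeasure_map (μ := ν) (hτ d).aemeasurable
    exact integrable_eI _ (by fun_prop) _
  have hL : ∫ x, eI (2*π*(t*x)) ∂ν
      = (s:ℝ)⁻¹ • ∑ d ∈ range s, ∫ x, eI (2*π*(t*x))
          ∂(Measure.map (fun x : ℝ => (-1:ℝ)^d*ρ*(x+(d:ℝ))) ν) := by
    conv_lhs => rw [hself]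
    rw [integral_smul_measure, integral_finset_sum_measure (fun d _ => hint d)]
    congr 1
    simp [ENNReal.toReal_inv]
  have hterm : ∀ d : ℕ, ∫ x, eI (2*π*(t*x))
        ∂(Measure.map (fun x : ℝ => (-1:ℝ)^d*ρ*(x+(d:ℝ))) ν)
      = eI (2*π*((-1)^d*ρ*(d:ℝ)*t)) * measureFT ν ((-1)^d*ρ*t) := by
    intro d
    rw [integral_map (hτ d).aemeasurable (aesm_eI _ (by fun_prop) _)]
    rw [measureFT_eq, ← integral_const_mul]
    congr 1; funext x
    rw [← eI_add]
    congr 1; ring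
  rw [measureFT_eq, hL]
  rw [Finset.sum_congr rfl (fun d _ => hterm d)]
  rw [Complex.real_smul]
  norm_num


lemma feq2 (hs : 2 ≤ s) (hρ : ρ = 1/p)
    (hself : ν = (s : ℝ≥0∞)⁻¹ • ∑ d ∈ Finset.range s,
      Measure.map (fun x : ℝ => (-1 : ℝ) ^ d * ρ * (x + (d : ℝ))) ν) (t : ℝ) :
    measureFT ν t = (s:ℂ)⁻¹ *
      ((∑ j ∈ range ((s+1)/2), eI (2*π*(2*(j:ℝ)*(ρ*t)))) * measureFT ν (ρ*t)
       + (∑ j ∈ range (s/2), eI (-(2*π*((2*(j:ℝ)+1)*(ρ*t))))) * (starRingEnd ℂ) (measureFT ν (ρ*t))) := by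
  rw [feq ν hs hρ hself t,
    sum_range_parity (fun d => eI (2*π*((-1)^d*ρ*(d:ℝ)*t)) * measureFT ν ((-1)^d*ρ*t)) s]
  congr 1
  rw [Finset.sum_mul, Finset.sum_mul]
  congr 1
  · apply Finset.sum_congr rfl
    intro j _
    have h1 : ((-1:ℝ))^(2*j) = 1 := by rw [pow_mul]; norm_num
    simp only [h1, one_mul]
    have h2 : 2*π*(ρ*(((2*j:ℕ)):ℝ)*t) = 2*π*(2*(j:ℝ)*(ρ*t)) := by push_cast; ring
    rw [h2]
  · apply Finset.sum_congr rfl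
    intro j _
    have h1 : ((-1:ℝ))^(2*j+1) = -1 := by rw [pow_succ, pow_mul]; norm_num
    simp only [h1]
    have h2 : 2*π*(-1*ρ*(((2*j+1:ℕ)):ℝ)*t) = -(2*π*((2*(j:ℝ)+1)*(ρ*t))) := by push_cast; ring
    rw [h2]
    congr 1
    have h3 : (-1)*ρ*t = -(ρ*t) := by ring
    rw [h3, ← F_conj]

lemma odd_arith {k : ℕ} (hk : 1 ≤ k) {u : ℝ}
    (habs : ‖(∑ j ∈ range (k+1), eI (2*π*(2*(j:ℝ)*u)))‖
      = ‖(∑ j ∈ range k, eI (-(2*π*((2*(j:ℝ)+1)*u))))‖) :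
    ∃ c : ℤ, 2*(2*(k:ℝ)+1)*u = (c:ℝ) ∧ ¬ ((2*(k:ℤ)+1) ∣ c) := by
  set z : ℂ := eI (2*π*(2*u)) with hz
  have hzpow : ∀ j : ℕ, z ^ j = eI (2*π*(2*(j:ℝ)*u)) := by
    intro j
    rw [hz, eI_pow]
    congr 1; ring
  have hSA : ∑ j ∈ range (k+1), eI (2*π*(2*(j:ℝ)*u)) = ∑ j ∈ range (k+1), z ^ j :=
    Finset.sum_congr rfl (fun j _ => (hzpow j).symm)
  have hSB : ∑ j ∈ range k, eI (-(2*π*((2*(j:ℝ)+1)*u)))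
      = (starRingEnd ℂ) (eI (2*π*u) * ∑ j ∈ range k, z ^ j) := by
    rw [map_mul, map_sum, conj_eI]
    rw [Finset.mul_sum]
    apply Finset.sum_congr rfl
    intro j _
    rw [hzpow j, conj_eI, ← eI_add]
    congr 1; ring
  rw [hSA, hSB] at habs
  rw [Complex.norm_conj, norm_mul, abs_eI, one_mul] at habs
  have hz1 : z ≠ 1 := by
    intro h1
    rw [h1] at habs
    simp only [one_pow, Finset.sum_const, Finset.card_range, nsmul_eq_mul, mul_one,
      Complex.norm_natCast] at habs
    have : ((k:ℝ)+1) = k := by exact_mod_cast habs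
    linarith
  have hnum : ‖z^(k+1) - 1‖ = ‖z^k - 1‖ := by
    rw [geom_sum_eq hz1, geom_sum_eq hz1, norm_div, norm_div] at habs
    have hden : ‖z - 1‖ ≠ 0 := by
      simp only [ne_eq, norm_eq_zero, sub_eq_zero]
      exact hz1
    field_simp at habs
    exact habs
  have hcos : Real.cos (2*π*(2*((k:ℝ)+1)*u)) = Real.cos (2*π*(2*(k:ℝ)*u)) := by
    have h1 : z^(k+1) = eI (2*π*(2*((k:ℝ)+1)*u)) := by rw [hzpow]; push_cast; ring_nf
    have h2 : z^k = eI (2*π*(2*(k:ℝ)*u)) := hzpow k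
    have e1 := abs_eI_sub_one (2*π*(2*((k:ℝ)+1)*u))
    have e2 := abs_eI_sub_one (2*π*(2*(k:ℝ)*u))
    rw [← h1] at e1
    rw [← h2] at e2
    rw [hnum] at e1
    linarith [e1, e2]
  have hprod := Real.cos_sub_cos (2*π*(2*((k:ℝ)+1)*u)) (2*π*(2*(k:ℝ)*u))
  rw [hcos, sub_self] at hprod
  have hhalf1 : (2*π*(2*((k:ℝ)+1)*u) + 2*π*(2*(k:ℝ)*u))/2 = 2*π*((2*(k:ℝ)+1)*u) := by ring
  have hhalf2 : (2*π*(2*((k:ℝ)+1)*u) - 2*π*(2*(k:ℝ)*u))/2 = 2*π*u := by ring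
  rw [hhalf1, hhalf2] at hprod
  have hπ : (π:ℝ) ≠ 0 := Real.pi_ne_zero
  have h2u : ∀ m : ℤ, 2*u = (m:ℝ) → False := by
    intro m hm
    apply hz1
    rw [hz]
    apply eI_eq_one_iff.mpr
    exact ⟨m, by linear_combination 2*π*hm⟩
  rcases mul_eq_zero.mp hprod.symm with h | h
  · rcases mul_eq_zero.mp h with h | h
    · norm_num [hπ] at h
    · obtain ⟨n, hn⟩ := Real.sin_eq_zero_iff.mp h
      refine ⟨n, ?_, ?_⟩
      · apply mul_left_cancel₀ hπ
        linear_combination -hn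
      · rintro ⟨m, rfl⟩
        apply h2u m
        have hs0 : (2*(k:ℝ)+1) ≠ 0 := by positivity
        apply mul_left_cancel₀ hs0
        have : 2*(2*(k:ℝ)+1)*u = ((2*(k:ℤ)+1)*m : ℤ) := by
          apply mul_left_cancel₀ hπ
          linear_combination -hn
        push_cast at this ⊢
        linarith [this]
  · obtain ⟨n, hn⟩ := Real.sin_eq_zero_iff.mp h
    exfalso
    apply h2u n
    apply mul_left_cancel₀ hπ
    linear_combination -hn

noncomputable def hfn (ν : Measure ℝ) (s : ℕ) (v : ℝ) : ℝ :=
  (eI (π*((s:ℝ)-1)*v) * measureFT ν v).re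

lemma E1_even (k : ℕ) (hk : s = 2*k) (hs : 2 ≤ s) (hρ : ρ = 1/p)
    (hself : ν = (s : ℝ≥0∞)⁻¹ • ∑ d ∈ Finset.range s,
      Measure.map (fun x : ℝ => (-1 : ℝ) ^ d * ρ * (x + (d : ℝ))) ν) (t : ℝ) :
    measureFT ν t = (s:ℂ)⁻¹ * (Wc k (ρ*t) *
      (eI (-(π*(ρ*t))) * (2 * ((hfn ν s (ρ*t) : ℝ) : ℂ)))) := by
  rw [feq2 ν hs hρ hself t]
  have e1 : (s+1)/2 = k := by omega
  have e2 : s/2 = k := by omega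
  rw [e1, e2, sum_even_eq k (ρ*t), sum_odd_eq k (ρ*t)]
  set u := ρ*t with hu
  have hs1 : (s:ℝ) - 1 = 2*(k:ℝ) - 1 := by rw [hk]; push_cast; ring
  have key : eI (-(π*u)) * (eI (π*((s:ℝ)-1)*u) * measureFT ν u
        + (starRingEnd ℂ) (eI (π*((s:ℝ)-1)*u) * measureFT ν u))
      = eI (2*π*(((k:ℝ)-1)*u)) * measureFT ν u
        + eI (-(2*π*((k:ℝ)*u))) * (starRingEnd ℂ) (measureFT ν u) := by
    have b1 : eI (2*π*(((k:ℝ)-1)*u)) = eI (-(π*u)) * eI (π*((s:ℝ)-1)*u) := by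
      rw [← eI_add]
      congr 1
      rw [hs1]; ring
    have b2 : eI (-(2*π*((k:ℝ)*u))) = eI (-(π*u)) * eI (-(π*((s:ℝ)-1)*u)) := by
      rw [← eI_add]
      congr 1
      rw [hs1]; ring
    rw [map_mul, conj_eI, b1, b2]
    ring
  have hz : ((2:ℂ) * ((hfn ν s u : ℝ) : ℂ))
      = eI (π*((s:ℝ)-1)*u) * measureFT ν u
        + (starRingEnd ℂ) (eI (π*((s:ℝ)-1)*u) * measureFT ν u) := by
    rw [Complex.add_conj]
    unfold hfn
    push_cast
    ring
  rw [hz, key]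
  ring

lemma E2_even (k : ℕ) (hk : s = 2*k) (hs : 2 ≤ s) (hρ : ρ = 1/p)
    (hself : ν = (s : ℝ≥0∞)⁻¹ • ∑ d ∈ Finset.range s,
      Measure.map (fun x : ℝ => (-1 : ℝ) ^ d * ρ * (x + (d : ℝ))) ν) (t : ℝ) :
    hfn ν s t = ((s:ℝ)⁻¹ * (Wc k (ρ*t)).re * (2 * hfn ν s (ρ*t)))
      * Real.cos (π*((s:ℝ)-1)*t + (-(π*(ρ*t)))) := by
  have hmain : eI (π*((s:ℝ)-1)*t) * measureFT ν t
      = ((((s:ℝ)⁻¹ * (Wc k (ρ*t)).re * (2 * hfn ν s (ρ*t))) : ℝ) : ℂ)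
        * eI (π*((s:ℝ)-1)*t + (-(π*(ρ*t)))) := by
    conv_lhs => rw [E1_even (ν := ν) k hk hs hρ hself t, Wc_eq_re k (ρ*t)]
    rw [eI_add]
    push_cast
    ring
  show (eI (π*((s:ℝ)-1)*t) * measureFT ν t).re = _
  rw [hmain, Complex.re_ofReal_mul, eI_re]

lemma tendsto_div_pow {p : ℕ} (hp : 2 ≤ p) (t : ℝ) :
    Tendsto (fun n : ℕ => t / (p:ℝ)^n) atTop (𝓝 0) := by
  have h1 : Tendsto (fun n : ℕ => ((p:ℝ)⁻¹)^n) atTop (𝓝 0) := by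
    apply tendsto_pow_atTop_nhds_zero_of_lt_one
    · positivity
    · rw [inv_lt_one_iff₀]; right; exact_mod_cast by omega
  have := h1.const_mul t
  simpa [div_eq_mul_inv, inv_pow, mul_zero] using this

lemma hfn_tendsto (hp : 2 ≤ p) (t : ℝ) :
    Tendsto (fun n => hfn ν s (t / p^n)) atTop (𝓝 1) := by
  have h1 := F_tendsto ν t hp
  have h2 : Tendsto (fun n : ℕ => eI (π*((s:ℝ)-1)*(t/p^n))) atTop (𝓝 1) := by
    have hc : Continuous fun a : ℝ => eI (π*((s:ℝ)-1)*a) := by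
      unfold eI
      exact Complex.continuous_exp.comp
        ((Complex.continuous_ofReal.comp (by continuity)).mul continuous_const)
    have := (hc.tendsto 0).comp (tendsto_div_pow hp t)
    simpa [eI_zero, Function.comp_def] using this
  have h3 : Tendsto (fun n : ℕ => eI (π*((s:ℝ)-1)*(t/p^n)) * measureFT ν (t/p^n))
      atTop (𝓝 1) := by simpa using h2.mul h1
  have h4 := (Complex.continuous_re.tendsto 1).comp h3
  simpa [hfn, Function.comp_def] using h4

lemma rdivp {v : ℝ} {j : ℕ} (hp : 2 ≤ p) (hρ : ρ = 1/p) : ρ*(v/p^j) = v/p^(j+1) := by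
  rw [hρ, pow_succ, one_div, inv_mul_eq_div, div_div]

lemma rdivp' {v : ℝ} {j : ℕ} (hp : 2 ≤ p) (hρ : ρ = 1/p) : ρ*v/p^j = v/p^(j+1) := by
  rw [mul_div_assoc, rdivp hp hρ]

lemma chase_even (k : ℕ) (hk : s = 2*k) (hs : 2 ≤ s) (hp : 2 ≤ p) (hρ : ρ = 1/p)
    (hself : ν = (s : ℝ≥0∞)⁻¹ • ∑ d ∈ Finset.range s,
      Measure.map (fun x : ℝ => (-1 : ℝ) ^ d * ρ * (x + (d : ℝ))) ν) :
    ∀ (n : ℕ) (v : ℝ), hfn ν s v = 0 → hfn ν s (v/p^n) ≠ 0 →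
    ∃ j : ℕ, Wc k (v/p^(j+1)) = 0 ∨
      Real.cos (π*((s:ℝ)-1)*(v/p^j) + (-(π*(v/p^(j+1))))) = 0 := by
  intro n
  induction n with
  | zero =>
    intro v h0 hne
    exact absurd (by simpa using h0) (by simpa using hne)
  | succ n ih =>
    intro v h0 hne
    have hE := E2_even (ν := ν) k hk hs hρ hself v
    rw [h0] at hE
    have hsne : ((s:ℝ))⁻¹ ≠ 0 := by
      have : (0:ℝ) < s := by positivity
      positivity
    rcases mul_eq_zero.mp hE.symm with h | hcos
    · rcases mul_eq_zero.mp h with h | h2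
      · rcases mul_eq_zero.mp h with h | hW
        · exact absurd h hsne
        · refine ⟨0, Or.inl ?_⟩
          rw [Wc_eq_re]
          rw [show v/p^(0+1) = ρ*v from by simpa using (rdivp' (v := v) (j := 0) hp hρ).symm]
          exact_mod_cast hW
      · rcases mul_eq_zero.mp h2 with h | hh
        · norm_num at h
        · -- hfn (ρ*v) = 0, recurse
          have hne' : hfn ν s (ρ*v/p^n) ≠ 0 := by
            rw [rdivp' hp hρ]
            exact hne
          obtain ⟨j, hj⟩ := ih (ρ*v) hh hne'
          refine ⟨j+1, ?_⟩
          rw [rdivp' hp hρ, rdivp' hp hρ] at hj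
          exact hj
    · refine ⟨0, Or.inr ?_⟩
      have : ρ*v = v/p^(0+1) := by simpa using rdivp' (v := v) (j := 0) hp hρ
      rw [← this]
      simpa using hcos

lemma zero_even (k : ℕ) (hk : s = 2*k) (hs : 2 ≤ s) (hp : 2 ≤ p) (hρ : ρ = 1/p)
    (hself : ν = (s : ℝ≥0∞)⁻¹ • ∑ d ∈ Finset.range s,
      Measure.map (fun x : ℝ => (-1 : ℝ) ^ d * ρ * (x + (d : ℝ))) ν)
    {t : ℝ} (hF : measureFT ν t = 0) :
    (∃ m : ℕ, ∃ c : ℤ, (s:ℝ)*t = (p:ℝ)^m * c ∧ ¬ (k:ℤ) ∣ c) ∨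
    (∃ m : ℕ, ∃ b : ℤ, 2*((s:ℝ)-1)*(p:ℝ)*t - 2*t = (p:ℝ)^m * (2*b+1)) := by
  have hk1 : 1 ≤ k := by omega
  have hpne : (p:ℝ) ≠ 0 := by positivity
  have hppow : ∀ m : ℕ, ((p:ℝ))^m ≠ 0 := fun m => by positivity
  have hsC : ((s:ℂ))⁻¹ ≠ 0 := by
    simp only [ne_eq, inv_eq_zero, Nat.cast_eq_zero]
    omega
  have base := E1_even (ν := ν) k hk hs hρ hself t
  rw [hF] at base
  have hsplit : Wc k (ρ*t) = 0 ∨ hfn ν s (ρ*t) = 0 := by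
    rcases mul_eq_zero.mp base.symm with h | h
    · exact absurd h hsC
    · rcases mul_eq_zero.mp h with h | h
      · exact Or.inl h
      · rcases mul_eq_zero.mp h with h | h
        · exact absurd h (eI_ne_zero _)
        · rcases mul_eq_zero.mp h with h | h
          · norm_num at h
          · right
            exact_mod_cast h
  -- helper to convert a Wc zero at u = t/p^m into the left branch
  have convW : ∀ (m : ℕ), Wc k (t/p^m) = 0 → (∃ m : ℕ, ∃ c : ℤ,
      (s:ℝ)*t = (p:ℝ)^m * c ∧ ¬ (k:ℤ) ∣ c) := by
    intro m hW
    obtain ⟨c, hc, hnd⟩ := Wc_zero_arith hk1 hW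
    refine ⟨m, c, ?_, hnd⟩
    have h2k : (2*(k:ℝ)) = (s:ℝ) := by rw [hk]; push_cast; ring
    rw [h2k] at hc
    field_simp at hc
    linarith [hc]
  rcases hsplit with hW | hh
  · apply Or.inl
    apply convW 1
    rw [show t/p^1 = ρ*t from by rw [← rdivp' hp hρ]; simp]
    exact hW
  · obtain ⟨N, hN⟩ := ((hfn_tendsto (ν := ν) (s := s) hp (ρ*t)).eventually_ne
      (one_ne_zero)).exists
    obtain ⟨j, hj⟩ := chase_even (ν := ν) k hk hs hp hρ hself N (ρ*t) hh hN
    rw [rdivp' hp hρ, rdivp' hp hρ] at hj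
    rcases hj with hW | hcos
    · exact Or.inl (convW (j+2) hW)
    · obtain ⟨b, hb⟩ := Real.cos_eq_zero_iff.mp hcos
      refine Or.inr ⟨j+2, b, ?_⟩
      have hπ : (π:ℝ) ≠ 0 := Real.pi_ne_zero
      have hb' : ((s:ℝ)-1)*(t/p^(j+1)) - t/p^(j+2) = (2*(b:ℝ)+1)/2 := by
        apply mul_left_cancel₀ hπ
        linear_combination hb
      have htt : t/(p:ℝ)^(j+1) = (p:ℝ)*(t/p^(j+2)) := by
        rw [pow_succ, pow_succ]
        field_simp
        ring
      rw [htt] at hb'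
      have ht : t = (p:ℝ)^(j+2)*(t/p^(j+2)) := by field_simp
      nth_rewrite 1 [ht]
      nth_rewrite 2 [ht]
      linear_combination (2*((p:ℝ))^(j+2))*hb'

lemma ddp {v : ℝ} {j : ℕ} (hp : 2 ≤ p) : (v/(p:ℝ))/(p:ℝ)^j = v/(p:ℝ)^(j+1) := by
  rw [div_div, ← pow_succ']

lemma chase_odd (hp : 2 ≤ p) :
    ∀ (n : ℕ) (v : ℝ), measureFT ν v = 0 → measureFT ν (v/p^n) ≠ 0 →
    ∃ j : ℕ, measureFT ν (v/p^j) = 0 ∧ measureFT ν (v/p^(j+1)) ≠ 0 := by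
  intro n
  induction n with
  | zero =>
    intro v h0 hne
    exact absurd (by simpa using h0) (by simpa using hne)
  | succ n ih =>
    intro v h0 hne
    by_cases h1 : measureFT ν (v/p^(0+1)) = 0
    · have hne' : measureFT ν ((v/p)/p^n) ≠ 0 := by
        rw [ddp hp]
        exact hne
      obtain ⟨j, hj1, hj2⟩ := ih (v/p) (by simpa using h1) hne'
      rw [ddp hp] at hj1 hj2
      exact ⟨j+1, hj1, hj2⟩
    · exact ⟨0, by simpa using h0, h1⟩

lemma zero_odd (k : ℕ) (hk : s = 2*k+1) (hs : 2 ≤ s) (hp : 2 ≤ p) (hρ : ρ = 1/p)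
    (hself : ν = (s : ℝ≥0∞)⁻¹ • ∑ d ∈ Finset.range s,
      Measure.map (fun x : ℝ => (-1 : ℝ) ^ d * ρ * (x + (d : ℝ))) ν)
    {t : ℝ} (hF : measureFT ν t = 0) :
    ∃ m : ℕ, ∃ c : ℤ, 2*(s:ℝ)*t = (p:ℝ)^m * c ∧ ¬ ((s:ℤ) ∣ c) := by
  have hk1 : 1 ≤ k := by omega
  have hpne : (p:ℝ) ≠ 0 := by positivity
  obtain ⟨N, hN⟩ := ((F_tendsto ν t hp).eventually_ne (one_ne_zero)).exists
  obtain ⟨j, hj1, hj2⟩ := chase_odd (ν := ν) hp N t hF hN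
  have hfe := feq2 ν hs hρ hself (t/p^j)
  rw [rdivp hp hρ] at hfe
  rw [hj1] at hfe
  have e1 : (s+1)/2 = k+1 := by omega
  have e2 : s/2 = k := by omega
  rw [e1, e2] at hfe
  set u := t/p^(j+1) with hu
  have hsC : ((s:ℂ)) ≠ 0 := by
    simp only [ne_eq, Nat.cast_eq_zero]
    omega
  have hzero : (∑ jj ∈ range (k+1), eI (2*π*(2*(jj:ℝ)*u))) * measureFT ν u
      + (∑ jj ∈ range k, eI (-(2*π*((2*(jj:ℝ)+1)*u)))) * (starRingEnd ℂ) (measureFT ν u)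
      = 0 := by
    have := hfe.symm
    rcases mul_eq_zero.mp this with h | h
    · exact absurd h (inv_ne_zero hsC)
    · exact h
  have habs : ‖(∑ jj ∈ range (k+1), eI (2*π*(2*(jj:ℝ)*u)))‖
      = ‖(∑ jj ∈ range k, eI (-(2*π*((2*(jj:ℝ)+1)*u))))‖ := by
    have he : (∑ jj ∈ range (k+1), eI (2*π*(2*(jj:ℝ)*u))) * measureFT ν u
        = -((∑ jj ∈ range k, eI (-(2*π*((2*(jj:ℝ)+1)*u)))) * (starRingEnd ℂ) (measureFT ν u)) := by
      linear_combination hzero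
    have := congrArg (fun w : ℂ => ‖w‖) he
    rw [norm_neg, norm_mul, norm_mul, Complex.norm_conj] at this
    have hFu : ‖measureFT ν u‖ ≠ 0 := by
      simp only [ne_eq, norm_eq_zero]
      exact hj2
    exact mul_right_cancel₀ hFu this
  obtain ⟨c, hc, hnd⟩ := odd_arith hk1 habs
  refine ⟨j+1, c, ?_, ?_⟩
  · have hs2 : 2*(2*(k:ℝ)+1) = 2*(s:ℝ) := by rw [hk]; push_cast; ring
    rw [hs2, hu] at hc
    field_simp at hc
    linarith [hc]
  · intro hdvd
    apply hnd
    have : ((2*(k:ℤ)+1)) = (s:ℤ) := by rw [hk]; push_cast; ring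
    rw [this]
    exact hdvd

/-! ### support points of ν -/

def PosAt (ν : Measure ℝ) (x : ℝ) : Prop := ∀ ε : ℝ, 0 < ε → 0 < ν (Metric.ball x ε)

lemma meas_dom (hs : 2 ≤ s)
    (hself : ν = (s : ℝ≥0∞)⁻¹ • ∑ d ∈ Finset.range s,
      Measure.map (fun x : ℝ => (-1 : ℝ) ^ d * ρ * (x + (d : ℝ))) ν)
    {d : ℕ} (hd : d < s) {A : Set ℝ} (hA : MeasurableSet A) :
    (s : ℝ≥0∞)⁻¹ * ν ((fun x : ℝ => (-1 : ℝ) ^ d * ρ * (x + (d : ℝ))) ⁻¹' A) ≤ ν A := by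
  have hτ : Measurable fun x : ℝ => (-1:ℝ)^d*ρ*(x+(d:ℝ)) := by fun_prop
  conv_rhs => rw [hself]
  rw [Measure.smul_apply]
  have h1 : (∑ d' ∈ range s, Measure.map (fun x : ℝ => (-1 : ℝ) ^ d' * ρ * (x + (d' : ℝ))) ν) A
      = ∑ d' ∈ range s, (Measure.map (fun x : ℝ => (-1 : ℝ) ^ d' * ρ * (x + (d' : ℝ))) ν) A := by
    simp [Measure.coe_finset_sum, Finset.sum_apply]
  rw [h1, smul_eq_mul]
  apply mul_le_mul_right
  calc ν ((fun x : ℝ => (-1 : ℝ) ^ d * ρ * (x + (d : ℝ))) ⁻¹' A)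
      = (Measure.map (fun x : ℝ => (-1 : ℝ) ^ d * ρ * (x + (d : ℝ))) ν) A :=
        (Measure.map_apply hτ hA).symm
  _ ≤ _ := by
    exact Finset.single_le_sum (f := fun d' : ℕ =>
      (Measure.map (fun x : ℝ => (-1 : ℝ) ^ d' * ρ * (x + (d' : ℝ))) ν) A)
      (fun i _ => zero_le) (Finset.mem_range.mpr hd)

lemma ball_preimage (hp : 2 ≤ p) (hρ : ρ = 1/p) (d : ℕ) (x : ℝ) (ε : ℝ) (hε : 0 < ε) :
    (fun y : ℝ => (-1 : ℝ) ^ d * ρ * (y + (d : ℝ))) ⁻¹' (Metric.ball ((-1 : ℝ) ^ d * ρ * (x + (d : ℝ))) ε)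
      = Metric.ball x (ε * p) := by
  have hppos : (0:ℝ) < p := by positivity
  have hρpos : 0 < ρ := by rw [hρ]; positivity
  ext y
  simp only [Set.mem_preimage, Metric.mem_ball, Real.dist_eq]
  have habs : |(-1:ℝ)^d| = 1 := by
    rcases neg_one_pow_eq_or ℝ d with h | h <;> rw [h] <;> simp
  constructor
  · intro h
    have : |(-1:ℝ)^d * ρ * (y - x)| < ε := by
      have he : (-1:ℝ)^d*ρ*(y+(d:ℝ)) - (-1:ℝ)^d*ρ*(x+(d:ℝ)) = (-1:ℝ)^d*ρ*(y-x) := by ring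
      rw [← he]; exact h
    rw [abs_mul, abs_mul, habs, one_mul, abs_of_pos hρpos] at this
    rw [hρ] at this
    calc |y - x| = p * (1/p * |y-x|) := by field_simp
    _ < p * ε := by
      apply mul_lt_mul_of_pos_left _ hppos
      linarith [this]
    _ = ε * p := by ring
  · intro h
    have he : (-1:ℝ)^d*ρ*(y+(d:ℝ)) - (-1:ℝ)^d*ρ*(x+(d:ℝ)) = (-1:ℝ)^d*ρ*(y-x) := by ring
    rw [he, abs_mul, abs_mul, habs, one_mul, abs_of_pos hρpos, hρ]
    rw [div_mul_eq_mul_div, one_mul, div_lt_iff₀ hppos]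
    linarith [h]

lemma posAt_step (hs : 2 ≤ s) (hp : 2 ≤ p) (hρ : ρ = 1/p)
    (hself : ν = (s : ℝ≥0∞)⁻¹ • ∑ d ∈ Finset.range s,
      Measure.map (fun x : ℝ => (-1 : ℝ) ^ d * ρ * (x + (d : ℝ))) ν)
    {x : ℝ} (hx : PosAt ν x) {d : ℕ} (hd : d < s) :
    PosAt ν ((-1 : ℝ) ^ d * ρ * (x + (d : ℝ))) := by
  intro ε hε
  have h1 := meas_dom (ν := ν) hs hself hd (measurableSet_ball
    (x := (-1 : ℝ) ^ d * ρ * (x + (d : ℝ))) (ε := ε))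
  rw [ball_preimage hp hρ d x ε hε] at h1
  have h2 : 0 < ν (Metric.ball x (ε * p)) := hx _ (by positivity)
  calc (0:ℝ≥0∞) < (s : ℝ≥0∞)⁻¹ * ν (Metric.ball x (ε * p)) := by
        apply ENNReal.mul_pos
        · rw [ENNReal.inv_ne_zero]
          exact ENNReal.natCast_ne_top s
        · exact h2.ne'
  _ ≤ _ := h1

lemma posAt_zero (hs : 2 ≤ s) (hp : 2 ≤ p) (hρ : ρ = 1/p)
    (hself : ν = (s : ℝ≥0∞)⁻¹ • ∑ d ∈ Finset.range s,
      Measure.map (fun x : ℝ => (-1 : ℝ) ^ d * ρ * (x + (d : ℝ))) ν) :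
    PosAt ν 0 := by
  intro ε hε
  have hstep : ∀ δ : ℝ, 0 < δ → 0 < ν (Metric.ball 0 (δ * p)) → 0 < ν (Metric.ball 0 δ) := by
    intro δ hδ hpos
    have h1 := meas_dom (ν := ν) hs hself (show 0 < s by omega)
      (measurableSet_ball (x := (0:ℝ)) (ε := δ))
    have h0 : ((-1:ℝ))^0*ρ*((0:ℝ)+((0:ℕ):ℝ)) = 0 := by simp
    have h2 := ball_preimage (p := p) (ρ := ρ) hp hρ 0 0 δ hδ
    rw [h0] at h2
    rw [h2] at h1
    calc (0:ℝ≥0∞) < (s : ℝ≥0∞)⁻¹ * ν (Metric.ball 0 (δ * p)) := by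
          apply ENNReal.mul_pos
          · rw [ENNReal.inv_ne_zero]
            exact ENNReal.natCast_ne_top s
          · exact hpos.ne'
    _ ≤ _ := h1
  -- find n with ν (ball 0 (ε * p^n)) > 0
  have hex : ∃ n : ℕ, 0 < ν (Metric.ball 0 (ε * p^n)) := by
    by_contra hno
    push_neg at hno
    have hnull : ∀ n : ℕ, ν (Metric.ball 0 (ε * p^n)) = 0 := fun n => le_antisymm (hno n) zero_le
    have huniv : (⋃ n : ℕ, Metric.ball (0:ℝ) (ε * p^n)) = Set.univ := by
      ext x
      simp only [Set.mem_iUnion, Metric.mem_ball, Real.dist_eq, Set.mem_univ, iff_true, sub_zero]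
      obtain ⟨n, hn⟩ := pow_unbounded_of_one_lt (|x|/ε) (show (1:ℝ) < p by exact_mod_cast hp)
      exact ⟨n, by rw [div_lt_iff₀ hε] at hn; linarith [hn]⟩
    have : ν (⋃ n : ℕ, Metric.ball (0:ℝ) (ε * p^n)) = 0 := measure_iUnion_null_iff.mpr hnull
    rw [huniv] at this
    simp [measure_univ] at this
  obtain ⟨n, hn⟩ := hex
  -- descend from n to 0
  have hdesc : ∀ n : ℕ, 0 < ν (Metric.ball 0 (ε * p^n)) → 0 < ν (Metric.ball 0 ε) := by
    intro n
    induction n with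
    | zero => intro h; simpa using h
    | succ n ih =>
      intro h
      apply ih
      have : 0 < ν (Metric.ball 0 ((ε*p^n) * p)) → 0 < ν (Metric.ball 0 (ε*p^n)) :=
        hstep (ε*p^n) (by positivity)
      apply this
      have he : ε*p^n*p = ε*p^(n+1) := by ring
      rw [he]
      exact h
  exact hdesc n hn

lemma posAt_points (hs : 2 ≤ s) (hp : 2 ≤ p) (hρ : ρ = 1/p)
    (hself : ν = (s : ℝ≥0∞)⁻¹ • ∑ d ∈ Finset.range s,
      Measure.map (fun x : ℝ => (-1 : ℝ) ^ d * ρ * (x + (d : ℝ))) ν) :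
    ∀ n : ℕ, PosAt ν (-ρ^(n+1)) := by
  have h1 : PosAt ν (-ρ) := by
    have := posAt_step (ν := ν) hs hp hρ hself (posAt_zero (ν := ν) hs hp hρ hself)
      (show 1 < s by omega)
    have he : ((-1:ℝ))^1*ρ*((0:ℝ)+((1:ℕ):ℝ)) = -ρ := by norm_num
    rwa [he] at this
  intro n
  induction n with
  | zero => simpa using h1
  | succ n ih =>
    have := posAt_step (ν := ν) hs hp hρ hself ih (show 0 < s by omega)
    have he : ((-1:ℝ))^0*ρ*((-ρ^(n+1))+((0:ℕ):ℝ)) = -ρ^(n+2) := by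
      simp; ring
    rwa [he] at this

lemma part1 (hs : 2 ≤ s) (hp : 2 ≤ p) (hgcd : Nat.gcd p s = 1) (hρ : ρ = 1/p)
    (hself : ν = (s : ℝ≥0∞)⁻¹ • ∑ d ∈ Finset.range s,
      Measure.map (fun x : ℝ => (-1 : ℝ) ^ d * ρ * (x + (d : ℝ))) ν) :
    ∀ Λ : Set ℝ, (∀ l1 ∈ Λ, ∀ l2 ∈ Λ, l1 ≠ l2 → measureFT ν (l1 - l2) = 0) →
      Λ.Finite ∧ Λ.ncard ≤ s := by
  intro Λ horth
  rcases Nat.even_or_odd s with ⟨k, hk⟩ | ⟨k, hk⟩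
  · apply comb_even s p k (by omega) hs hp hgcd Λ
    intro x hx y hy hxy
    exact zero_even (ν := ν) k (by omega) hs hp hρ hself (horth x hx y hy hxy)
  · apply comb_odd s p hs hp hgcd Λ
    intro x hx y hy hxy
    exact zero_odd (ν := ν) k (by omega) hs hp hρ hself (horth x hx y hy hxy)

lemma exp_eq_eI (l z : ℝ) :
    Complex.exp (2 * (Real.pi : ℂ) * Complex.I * (l : ℂ) * (z : ℂ)) = eI (2*π*(l*z)) := by
  unfold eI
  congr 1
  push_cast
  ring

lemma part2 (hs : 2 ≤ s) (hp : 2 ≤ p) (hgcd : Nat.gcd p s = 1) (hρ : ρ = 1/p)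
    (hself : ν = (s : ℝ≥0∞)⁻¹ • ∑ d ∈ Finset.range s,
      Measure.map (fun x : ℝ => (-1 : ℝ) ^ d * ρ * (x + (d : ℝ))) ν) :
    ¬ IsSpectral ν := by
  rintro ⟨Λ, horth, htotal⟩
  obtain ⟨hfin, -⟩ := part1 (ν := ν) hs hp hgcd hρ hself Λ horth
  classical
  set Λf := hfin.toFinset with hΛf
  set N := Λf.card with hN
  have hppos : (0:ℝ) < p := by positivity
  have hρpos : 0 < ρ := by rw [hρ]; positivity
  have hρhalf : ρ ≤ 1/2 := by
    rw [hρ]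
    apply div_le_div_of_nonneg_left (by norm_num) (by norm_num)
    exact_mod_cast hp
  have hρ1 : ρ < 1 := by linarith
  set x : Fin (N+1) → ℝ := fun i => -ρ^((i:ℕ)+1) with hx
  set r : Fin (N+1) → ℝ := fun i => (ρ^((i:ℕ)+1) - ρ^((i:ℕ)+2))/4 with hr
  have hrpos : ∀ i, 0 < r i := by
    intro i
    rw [hr]
    have h1 : ρ^((i:ℕ)+2) < ρ^((i:ℕ)+1) := by
      apply pow_lt_pow_right_of_lt_one₀ hρpos hρ1
      omega
    simp only
    linarith
  set A : Fin (N+1) → Set ℝ := fun i => Metric.ball (x i) (r i) with hA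
  have hApos : ∀ i, 0 < ν (A i) := by
    intro i
    exact posAt_points (ν := ν) hs hp hρ hself (i:ℕ) (r i) (hrpos i)
  have hdisj : ∀ i j : Fin (N+1), i ≠ j → Disjoint (A i) (A j) := by
    have key : ∀ i j : Fin (N+1), (i:ℕ) < (j:ℕ) → Disjoint (A i) (A j) := by
      intro i j hij
      apply Metric.ball_disjoint_ball
      rw [Real.dist_eq]
      have e1 : ρ^((j:ℕ)+1) ≤ ρ^((i:ℕ)+2) :=
        pow_le_pow_of_le_one (le_of_lt hρpos) (le_of_lt hρ1) (by omega)
      have e2 : ρ^((j:ℕ)+2) ≤ ρ^((j:ℕ)+1) :=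
        pow_le_pow_of_le_one (le_of_lt hρpos) (le_of_lt hρ1) (by omega)
      have e3 : ρ^((i:ℕ)+2) = ρ^((i:ℕ)+1)*ρ := by ring
      have e4 : (0:ℝ) < ρ^((i:ℕ)+1) := by positivity
      have e5 : (0:ℝ) < ρ^((j:ℕ)+1) := by positivity
      have e6 : (0:ℝ) < ρ^((j:ℕ)+2) := by positivity
      have habs : |x i - x j| = ρ^((i:ℕ)+1) - ρ^((j:ℕ)+1) := by
        rw [hx]
        simp only
        rw [abs_of_nonpos (by nlinarith)]
        ring
      rw [habs, hr]
      simp only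
      nlinarith [e1, e2, e3, e4, e5, e6, hρhalf]
    intro i j hij
    rcases lt_or_gt_of_ne (fun h => hij (Fin.ext h) : (i:ℕ) ≠ (j:ℕ)) with h | h
    · exact key i j h
    · exact (key j i h).symm
  set M : Matrix Λf (Fin (N+1)) ℂ := fun l i =>
    ∫ z in A i, (starRingEnd ℂ)
      (Complex.exp (2 * (Real.pi : ℂ) * Complex.I * ((l:ℝ) : ℂ) * (z : ℂ))) ∂ν with hM
  have hnotinj : ¬ Function.Injective M.mulVecLin := by
    intro hinj
    have hle := LinearMap.finrank_le_finrank_of_injective hinj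
    rw [Module.finrank_pi, Module.finrank_pi, Fintype.card_fin, Fintype.card_coe] at hle
    omega
  obtain ⟨a, b, hab, hne⟩ := Function.not_injective_iff.mp hnotinj
  set c : Fin (N+1) → ℂ := a - b with hc
  have hc0 : c ≠ 0 := sub_ne_zero.mpr hne
  have hTc : M.mulVecLin c = 0 := by rw [hc, map_sub, hab, sub_self]
  set f : ℝ → ℂ := fun z => ∑ i, (A i).indicator (fun _ => c i) z with hf
  have hMem : MemLp f 2 ν := by
    have h1 := memLp_finset_sum' (μ := ν) (p := 2) Finset.univ
      (f := fun i : Fin (N+1) => (A i).indicator (fun _ => c i))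
      (fun i _ => memLp_indicator_const 2 measurableSet_ball (c i) (Or.inr (measure_ne_top ν _)))
    have h2 : f = ∑ i : Fin (N+1), (A i).indicator (fun _ => c i) := by
      funext z
      rw [hf]
      simp [Finset.sum_apply]
    rw [h2]
    exact h1
  have hconstraint : ∀ l ∈ Λ, (∫ z, f z * (starRingEnd ℂ)
      (Complex.exp (2 * (Real.pi : ℂ) * Complex.I * (l : ℂ) * (z : ℂ))) ∂ν) = 0 := by
    intro l hl
    have hlf : l ∈ Λf := hfin.mem_toFinset.mpr hl
    have hintconj : Integrable (fun z : ℝ => (starRingEnd ℂ)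
        (Complex.exp (2 * (Real.pi : ℂ) * Complex.I * (l : ℂ) * (z : ℂ)))) ν := by
      apply (integrable_eI (fun z : ℝ => -(2*π*(l*z))) (by fun_prop) ν).congr
      filter_upwards with z
      rw [exp_eq_eI, conj_eI]
    have hsummand : ∀ (i : Fin (N+1)), Integrable (fun z : ℝ =>
        (A i).indicator (fun _ => c i) z * (starRingEnd ℂ)
          (Complex.exp (2 * (Real.pi : ℂ) * Complex.I * (l : ℂ) * (z : ℂ)))) ν := by
      intro i
      apply Integrable.bdd_mul (c := ‖c i‖) hintconj
      · exact ((measurable_const (a := c i)).indicator measurableSet_ball).aestronglyMeasurable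
      · refine Filter.Eventually.of_forall (fun z => ?_)
        by_cases hz : z ∈ A i
        · rw [Set.indicator_of_mem hz]
        · rw [Set.indicator_of_notMem hz]
          simp
    have hexpand : (∫ z, f z * (starRingEnd ℂ)
        (Complex.exp (2 * (Real.pi : ℂ) * Complex.I * (l : ℂ) * (z : ℂ))) ∂ν)
        = ∑ i : Fin (N+1), ∫ z, (A i).indicator (fun _ => c i) z * (starRingEnd ℂ)
          (Complex.exp (2 * (Real.pi : ℂ) * Complex.I * (l : ℂ) * (z : ℂ))) ∂ν := by
      rw [← integral_finset_sum _ (fun i _ => hsummand i)]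
      congr 1
      funext z
      rw [hf]
      simp only
      rw [← Finset.sum_mul]
    rw [hexpand]
    have hterm : ∀ i : Fin (N+1), (∫ z, (A i).indicator (fun _ => c i) z * (starRingEnd ℂ)
        (Complex.exp (2 * (Real.pi : ℂ) * Complex.I * (l : ℂ) * (z : ℂ))) ∂ν)
        = M ⟨l, hlf⟩ i * c i := by
      intro i
      have h1 : ∀ z : ℝ, (A i).indicator (fun _ => c i) z * (starRingEnd ℂ)
          (Complex.exp (2 * (Real.pi : ℂ) * Complex.I * (l : ℂ) * (z : ℂ)))
          = (A i).indicator (fun z' => c i * (starRingEnd ℂ)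
            (Complex.exp (2 * (Real.pi : ℂ) * Complex.I * (l : ℂ) * (z' : ℂ)))) z := by
        intro z
        rw [Set.indicator_mul_left]
      rw [show (fun z => (A i).indicator (fun _ => c i) z * (starRingEnd ℂ)
          (Complex.exp (2 * (Real.pi : ℂ) * Complex.I * (l : ℂ) * (z : ℂ)))) = _ from funext h1]
      rw [integral_indicator measurableSet_ball]
      rw [MeasureTheory.integral_const_mul]
      rw [hM]
      simp only
      ring
    rw [Finset.sum_congr rfl (fun i _ => hterm i)]
    have := congrFun hTc ⟨l, hlf⟩
    rw [Matrix.mulVecLin_apply] at this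
    simpa [Matrix.mulVec, dotProduct, mul_comm] using this
  have hae := htotal f hMem hconstraint
  obtain ⟨i0, hi0⟩ := Function.ne_iff.mp hc0
  have hnull : ν {z | ¬ (f z = 0)} = 0 := ae_iff.mp hae
  have hsub : A i0 ⊆ {z | ¬ (f z = 0)} := by
    intro z hz
    have hfz : f z = c i0 := by
      rw [hf]
      simp only
      rw [Finset.sum_eq_single i0]
      · exact Set.indicator_of_mem hz _
      · intro j _ hji
        apply Set.indicator_of_notMem
        intro hzj
        exact (Set.disjoint_left.mp (hdisj i0 j (Ne.symm hji)) hz) hzj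
      · intro h
        exact absurd (Finset.mem_univ i0) h
    simp only [Set.mem_setOf_eq, hfz]
    simpa using hi0
  have : ν (A i0) = 0 := measure_mono_null hsub hnull
  exact absurd this (hApos i0).ne'

end M
end NSC

/-- for integers `s ≥ 2`, `p ≥ 2` with `gcd(p,s)=1`, `ρ = 1/p`, and the
self-similar measure `ν` of the IFS `{τ_d(x)=(-1)^d ρ(x+d)}_{d=0}^{s-1}` with equal weights:
any orthogonal set of exponentials for `ν` has at most `s` elements, and `ν` is not a
spectral measure. -/
theorem nonspectral_coprime (s p : ℕ) (hs : 2 ≤ s) (hp : 2 ≤ p)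
    (hgcd : Nat.gcd p s = 1) (ρ : ℝ) (hρ : ρ = 1 / p)
    (ν : Measure ℝ) [IsProbabilityMeasure ν]
    (hself : ν = (s : ℝ≥0∞)⁻¹ • ∑ d ∈ Finset.range s,
      Measure.map (fun x : ℝ => (-1 : ℝ) ^ d * ρ * (x + (d : ℝ))) ν) :
    (∀ Λ : Set ℝ, (∀ l1 ∈ Λ, ∀ l2 ∈ Λ, l1 ≠ l2 → measureFT ν (l1 - l2) = 0) →
      Λ.Finite ∧ Λ.ncard ≤ s) ∧ ¬ IsSpectral ν :=
  ⟨NSC.part1 (ν := ν) hs hp hgcd hρ hself, NSC.part2 (ν := ν) hs hp hgcd hρ hself⟩
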